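/- arXiv:1710.02877 — 2 statements merged into one kernel-verified Lean document; each statement's English description precedes it below -/
import Mathlib

section
/- Let G₁, …, Gₙ be NFAs over alphabets Σ₁, …, Σₙ and let Σ_o ⊆ ⋃ᵢ Σᵢ be a set of observable events such that every event shared by two distinct systems is observable (i.e., Σᵢ ∩ Σⱼ ⊆ Σ_o for i ≠ j). Let P be the projection to Σ_o. Then for every word w, a state (x₁, …, xₙ) is reachable in the parallel composition G₁ ‖ ⋯ ‖ Gₙ by some word w' with P(w') = P(w) if and only if for every i, the state xᵢ is reachable in Gᵢ by some word wᵢ with P(wᵢ) restricted to Σᵢ ∩ Σ_o equal to the corresponding restriction of P(w). -/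
/-- A nondeterministic finite automaton (all states marked): transition relation and initial states. -/
structure NFA' (Q E : Type) where
  δ : Q → E → Set Q
  I : Set Q

/-- Extended transition function on sets of states. -/
def NFA'.run {Q E : Type} (A : NFA' Q E) : List E → Set Q → Set Q
  | [], S => S
  | a :: w, S => A.run w {q | ∃ p ∈ S, q ∈ A.δ p a}

/-- The language generated by the automaton. -/
def NFA'.lang {Q E : Type} (A : NFA' Q E) : Set (List E) :=
  {w | (A.run w A.I).Nonempty}

-- The natural projection to the observable events `S`: erase all events outside `S`.
open Classical in
noncomputable def proj {E : Type} (S : Set E) : List E → List E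
  | [] => []
  | a :: w => if a ∈ S then a :: proj S w else proj S w

inductive NPath {Q E : Type} (A : NFA' Q E) : Q → List E → Q → Prop
  | nil (p : Q) : NPath A p [] p
  | cons {p q' q : Q} {a : E} {w : List E} (h : q' ∈ A.δ p a) (h' : NPath A q' w q) :
      NPath A p (a :: w) q

theorem mem_run_iff {Q E : Type} (A : NFA' Q E) (w : List E) (S : Set Q) (q : Q) :
    q ∈ A.run w S ↔ ∃ p ∈ S, NPath A p w q := by
  induction w generalizing S with
  | nil =>
    simp only [NFA'.run]
    constructor
    · exact fun h => ⟨q, h, NPath.nil q⟩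
    · rintro ⟨p, hp, hpath⟩; cases hpath; exact hp
  | cons a w ih =>
    simp only [NFA'.run, ih]
    constructor
    · rintro ⟨r, ⟨p, hp, hr⟩, hpath⟩; exact ⟨p, hp, NPath.cons hr hpath⟩
    · rintro ⟨p, hp, hpath⟩
      cases hpath with
      | cons h h' => exact ⟨_, ⟨p, hp, h⟩, h'⟩

theorem npath_append {Q E : Type} {A : NFA' Q E} {u v : List E} {p q : Q} :
    NPath A p (u ++ v) q ↔ ∃ r, NPath A p u r ∧ NPath A r v q := by
  induction u generalizing p with
  | nil =>
    simp only [List.nil_append]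
    constructor
    · exact fun h => ⟨p, NPath.nil p, h⟩
    · rintro ⟨r, h1, h2⟩; cases h1; exact h2
  | cons a u ih =>
    constructor
    · intro h
      cases h with
      | cons h h' =>
        obtain ⟨r, h1, h2⟩ := ih.mp h'
        exact ⟨r, NPath.cons h h1, h2⟩
    · rintro ⟨r, h1, h2⟩
      cases h1 with
      | cons h h' => exact NPath.cons h (ih.mpr ⟨r, h', h2⟩)

theorem proj_append {E : Type} (T : Set E) (u v : List E) :
    proj T (u ++ v) = proj T u ++ proj T v := by
  induction u with
  | nil => simp [proj]
  | cons a u ih =>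
    by_cases h : a ∈ T <;> simp [proj, h, ih]

theorem proj_eq_nil_of {E : Type} {T : Set E} {w : List E} (h : ∀ b ∈ w, b ∉ T) :
    proj T w = [] := by
  induction w with
  | nil => rfl
  | cons a w ih =>
    simp only [proj, if_neg (h a (by simp))]
    exact ih fun b hb => h b (by simp [hb])

theorem forall_not_of_proj_eq_nil {E : Type} {T : Set E} {w : List E}
    (h : proj T w = []) : ∀ b ∈ w, b ∉ T := by
  induction w with
  | nil => simp
  | cons a w ih =>
    by_cases ha : a ∈ T
    · simp [proj, ha] at h
    · simp only [proj, if_neg ha] at h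
      intro b hb
      rcases List.mem_cons.mp hb with rfl | hb
      · exact ha
      · exact ih h b hb

theorem mem_of_mem_proj {E : Type} {T : Set E} {w : List E} {a : E}
    (h : a ∈ proj T w) : a ∈ w ∧ a ∈ T := by
  induction w with
  | nil => simp [proj] at h
  | cons b w ih =>
    by_cases hb : b ∈ T
    · simp only [proj, if_pos hb] at h
      rcases List.mem_cons.mp h with rfl | h
      · exact ⟨by simp, hb⟩
      · exact ⟨by simp [(ih h).1], (ih h).2⟩
    · simp only [proj, if_neg hb] at h
      exact ⟨by simp [(ih h).1], (ih h).2⟩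

theorem proj_proj {E : Type} {T U : Set E} (h : T ⊆ U) (w : List E) :
    proj T (proj U w) = proj T w := by
  induction w with
  | nil => rfl
  | cons a w ih =>
    by_cases hU : a ∈ U
    · by_cases hT : a ∈ T <;> simp [proj, hU, hT, ih]
    · have hT : a ∉ T := fun ht => hU (h ht)
      simp [proj, hU, hT, ih]

theorem proj_congr {E : Type} {T T' : Set E} {w : List E}
    (h : ∀ a ∈ w, a ∈ T ↔ a ∈ T') : proj T w = proj T' w := by
  induction w with
  | nil => rfl
  | cons a w ih =>
    have := h a (by simp)
    by_cases hT : a ∈ T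
    · simp [proj, hT, this.mp hT, ih fun b hb => h b (by simp [hb])]
    · have hT' : a ∉ T' := fun ht' => hT (this.mpr ht')
      simp [proj, hT, hT', ih fun b hb => h b (by simp [hb])]

theorem proj_eq_cons {E : Type} {T : Set E} {w t : List E} {a : E}
    (h : proj T w = a :: t) :
    ∃ u v, w = u ++ a :: v ∧ (∀ b ∈ u, b ∉ T) ∧ a ∈ T ∧ proj T v = t := by
  induction w with
  | nil => simp [proj] at h
  | cons b w ih =>
    by_cases hb : b ∈ T
    · simp only [proj, if_pos hb, List.cons.injEq] at h
      exact ⟨[], w, by simp [h.1], by simp, h.1 ▸ hb, h.2⟩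
    · simp only [proj, if_neg hb] at h
      obtain ⟨u, v, h1, h2, h3, h4⟩ := ih h
      refine ⟨b :: u, v, by simp [h1], ?_, h3, h4⟩
      intro c hc
      rcases List.mem_cons.mp hc with rfl | hc
      · exact hb
      · exact h2 c hc

/-- Parallel (synchronous) composition of a family of NFAs `A i` with alphabets `S i`:
on an event `a`, every component whose alphabet contains `a` makes an `a`-transition,
all other components stay put; events outside `⋃ i, S i` are blocked. -/
def parN {n : ℕ} {E : Type} {Qs : Fin n → Type} (S : Fin n → Set E)
    (A : ∀ i, NFA' (Qs i) E) : NFA' (∀ i, Qs i) E where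
  δ := fun p a =>
    {q | (∃ i, a ∈ S i) ∧
         ∀ i, (a ∈ S i → q i ∈ (A i).δ (p i) a) ∧ (a ∉ S i → q i = p i)}
  I := {p | ∀ i, p i ∈ (A i).I}

section Par

variable {n : ℕ} {E : Type} {Qs : Fin n → Type}
variable (S : Fin n → Set E) (So : Set E) (A : ∀ i, NFA' (Qs i) E)

/-- Projecting a path of the composition onto a component. -/
theorem path_proj {p x : ∀ i, Qs i} {w : List E} (i : Fin n)
    (h : NPath (parN S A) p w x) :
    NPath (A i) (p i) (proj (S i) w) (x i) := by
  induction h with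
  | nil => exact NPath.nil _
  | @cons p q' q a w hstep hpath ih =>
    obtain ⟨_, hall⟩ := hstep
    by_cases ha : a ∈ S i
    · simpa [proj, ha] using NPath.cons ((hall i).1 ha) ih
    · have : q' i = p i := (hall i).2 ha
      simpa [proj, ha, this] using ih

/-- Letters of a component path are in the component's alphabet. -/
theorem path_letters (hown : ∀ i (q : Qs i) (a : E), a ∉ S i → (A i).δ q a = ∅)
    (i : Fin n) {p q : Qs i} {w : List E} (h : NPath (A i) p w q) :
    ∀ a ∈ w, a ∈ S i := by
  induction h with
  | nil => simp
  | @cons p q' q a w hstep hpath ih =>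
    intro b hb
    rcases List.mem_cons.mp hb with rfl | hb
    · by_contra hbs
      rw [hown i p b hbs] at hstep
      exact hstep
    · exact ih b hb

/-- A private path of one component lifts to the composition. -/
theorem silent_path (i : Fin n) {p : ∀ j, Qs j} {u : List E} {y : Qs i}
    (hu : ∀ b ∈ u, b ∈ S i ∧ ∀ j, j ≠ i → b ∉ S j)
    (hp : NPath (A i) (p i) u y) :
    NPath (parN S A) p u (Function.update p i y) := by
  induction u generalizing p with
  | nil =>
    cases hp
    rw [Function.update_eq_self]
    exact NPath.nil _
  | cons a u ih =>
    cases hp with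
    | @cons _ q' _ _ _ hstep hpath =>
      have ha := hu a (by simp)
      have hstep' : Function.update p i q' ∈ (parN S A).δ p a := by
        refine ⟨⟨i, ha.1⟩, fun j => ?_⟩
        by_cases hj : j = i
        · subst hj
          exact ⟨fun _ => by simpa using hstep, fun hna => absurd ha.1 hna⟩
        · refine ⟨fun haj => absurd haj (ha.2 j hj), fun _ => ?_⟩
          simp [Function.update_of_ne hj]
      have := ih (p := Function.update p i q')
        (fun b hb => hu b (by simp [hb])) (by simpa using hpath)
      rw [Function.update_idem] at this
      exact NPath.cons hstep' this

/-- Several components can do private paths one after another. -/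
theorem silent_all {L : List (Fin n)} (hnd : L.Nodup) {p x : ∀ j, Qs j}
    (h : ∀ i ∈ L, ∃ u : List E, (∀ b ∈ u, b ∈ S i ∧ b ∉ So ∧ ∀ j, j ≠ i → b ∉ S j) ∧
        NPath (A i) (p i) u (x i))
    (h2 : ∀ i ∉ L, x i = p i) :
    ∃ w' : List E, (∀ b ∈ w', (∃ i, b ∈ S i) ∧ b ∉ So) ∧ NPath (parN S A) p w' x := by
  induction L generalizing p with
  | nil =>
    have : x = p := funext fun i => h2 i (by simp)
    subst this
    exact ⟨[], by simp, NPath.nil _⟩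
  | cons i L ih =>
    obtain ⟨hiL, hndL⟩ := List.nodup_cons.mp hnd
    obtain ⟨u, hu, hup⟩ := h i (by simp)
    have hlift : NPath (parN S A) p u (Function.update p i (x i)) :=
      silent_path S A i (fun b hb => ⟨(hu b hb).1, (hu b hb).2.2⟩) hup
    set p' := Function.update p i (x i) with hp'
    obtain ⟨w2, hw2, hw2p⟩ := ih hndL (p := p')
      (fun j hj => by
        have hji : j ≠ i := fun e => hiL (e ▸ hj)
        obtain ⟨uj, huj, hujp⟩ := h j (by simp [hj])
        exact ⟨uj, huj, by rwa [hp', Function.update_of_ne hji]⟩)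
      (fun j hj => by
        by_cases hji : j = i
        · subst hji; simp [hp']
        · have : j ∉ L := fun e => hj (by simp [e])
          rw [h2 j (by simp [hji, this]), hp', Function.update_of_ne hji])
    refine ⟨u ++ w2, ?_, npath_append.mpr ⟨p', hlift, hw2p⟩⟩
    intro b hb
    rcases List.mem_append.mp hb with hb | hb
    · exact ⟨⟨i, (hu b hb).1⟩, (hu b hb).2.1⟩
    · exact hw2 b hb

end Par
section Main

variable {n : ℕ} {E : Type} {Qs : Fin n → Type}
variable (S : Fin n → Set E) (So : Set E) (A : ∀ i, NFA' (Qs i) E)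

theorem obs_induction
    (hshared : ∀ i j, i ≠ j → S i ∩ S j ⊆ So) :
    ∀ (ω : List E), (∀ a ∈ ω, a ∈ So ∧ ∃ i, a ∈ S i) →
    ∀ (p x : ∀ i, Qs i) (ws : Fin n → List E),
    (∀ i, (∀ b ∈ ws i, b ∈ S i) ∧ proj So (ws i) = proj (S i ∩ So) ω ∧
        NPath (A i) (p i) (ws i) (x i)) →
    ∃ w' : List E, (∀ a ∈ w', ∃ i, a ∈ S i) ∧ proj So w' = ω ∧
        NPath (parN S A) p w' x := by
  intro ω
  induction ω with
  | nil =>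
    intro _ p x ws hws
    obtain ⟨w', hw', hpath⟩ := silent_all S So A (L := List.finRange n)
      (List.nodup_finRange n) (p := p) (x := x)
      (fun i _ => by
        refine ⟨ws i, fun b hb => ?_, (hws i).2.2⟩
        have hbS : b ∈ S i := (hws i).1 b hb
        have hbo : b ∉ So :=
          forall_not_of_proj_eq_nil (by simpa [proj] using (hws i).2.1) b hb
        refine ⟨hbS, hbo, fun j hj => fun hbj => ?_⟩
        exact hbo (hshared i j (Ne.symm hj) ⟨hbS, hbj⟩))
      (fun i hi => absurd (List.mem_finRange i) hi)
    exact ⟨w', fun b hb => (hw' b hb).1,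
      proj_eq_nil_of (fun b hb => (hw' b hb).2), hpath⟩
  | cons a ω' ih =>
    intro hω p x ws hws
    obtain ⟨haSo, i0, hai0⟩ := hω a (by simp)
    have H : ∀ i, ∃ (u v : List E) (y z : Qs i),
        (∀ b ∈ u, b ∈ S i ∧ b ∉ So) ∧ NPath (A i) (p i) u y ∧
        (a ∈ S i → z ∈ (A i).δ y a) ∧ (a ∉ S i → z = y ∧ u = []) ∧
        (∀ b ∈ v, b ∈ S i) ∧ proj So v = proj (S i ∩ So) ω' ∧
        NPath (A i) z v (x i) := by
      intro i
      by_cases hai : a ∈ S i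
      · have hcons : proj So (ws i) = a :: proj (S i ∩ So) ω' := by
          rw [(hws i).2.1]
          simp [proj, Set.mem_inter_iff, hai, haSo]
        obtain ⟨u, v, hsplit, hu, _, hv⟩ := proj_eq_cons hcons
        have hpath := (hws i).2.2
        rw [hsplit] at hpath
        obtain ⟨y, hy, hrest⟩ := npath_append.mp hpath
        cases hrest with
        | cons hstep hpv =>
          refine ⟨u, v, y, _, fun b hb => ⟨(hws i).1 b (by simp [hsplit, hb]), hu b hb⟩,
            hy, fun _ => hstep, fun hna => absurd hai hna,
            fun b hb => (hws i).1 b (by simp [hsplit, hb]), hv, hpv⟩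
      · refine ⟨[], ws i, p i, p i, by simp, NPath.nil _,
          fun ha => absurd ha hai, fun _ => ⟨rfl, rfl⟩, (hws i).1, ?_, (hws i).2.2⟩
        rw [(hws i).2.1]
        have : a ∉ S i ∩ So := fun h => hai h.1
        simp [proj, this]
    choose u v y z hu hyp hza hzn hv hvproj hvpath using H
    -- silent prefix: from p to y
    obtain ⟨w1, hw1, hw1p⟩ := silent_all S So A (L := List.finRange n)
      (List.nodup_finRange n) (p := p) (x := y)
      (fun i _ => ⟨u i, fun b hb => ⟨(hu i b hb).1, (hu i b hb).2,
        fun j hj hbj => (hu i b hb).2 (hshared i j (Ne.symm hj) ⟨(hu i b hb).1, hbj⟩)⟩,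
        hyp i⟩)
      (fun i hi => absurd (List.mem_finRange i) hi)
    -- synchronized step: from y to z
    have hstep : z ∈ (parN S A).δ y a := by
      refine ⟨⟨i0, hai0⟩, fun i => ⟨hza i, fun hna => (hzn i hna).1⟩⟩
    -- rest by induction
    obtain ⟨w2, hw2, hw2proj, hw2p⟩ := ih (fun b hb => hω b (by simp [hb])) z x v
      (fun i => ⟨hv i, hvproj i, hvpath i⟩)
    refine ⟨w1 ++ a :: w2, ?_, ?_, ?_⟩
    · intro b hb
      rcases List.mem_append.mp hb with hb | hb
      · exact (hw1 b hb).1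
      · rcases List.mem_cons.mp hb with rfl | hb
        · exact ⟨i0, hai0⟩
        · exact hw2 b hb
    · rw [proj_append, proj_eq_nil_of (fun b hb => (hw1 b hb).2)]
      simp [proj, haSo, hw2proj]
    · exact npath_append.mpr ⟨y, hw1p, NPath.cons hstep hw2p⟩

end Main

/-- if all events shared by two distinct modules are observable
(`Σᵢ ∩ Σⱼ ⊆ Σ_o` for `i ≠ j`) and each module only moves on events of its own
alphabet, then for every word `w` over `⋃ i, Σᵢ`: a state `(x₁, …, xₙ)` is
reachable in `G₁ ‖ ⋯ ‖ Gₙ` by some word `w'` with `P(w') = P(w)` iff for every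
`i` the state `xᵢ` is reachable in `Gᵢ` by some word `wᵢ` whose restriction to
`Σᵢ ∩ Σ_o` equals the corresponding restriction of `w`. -/
theorem parN_reachable_up_to_observation_iff_componentwise
    {n : ℕ} {E : Type} {Qs : Fin n → Type}
    (S : Fin n → Set E) (So : Set E) (A : ∀ i, NFA' (Qs i) E)
    (hshared : ∀ i j, i ≠ j → S i ∩ S j ⊆ So)
    (hown : ∀ i (q : Qs i) (a : E), a ∉ S i → (A i).δ q a = ∅)
    (w : List E) (hw : ∀ a ∈ w, ∃ i, a ∈ S i) (x : ∀ i, Qs i) :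
    (∃ w' : List E, (∀ a ∈ w', ∃ i, a ∈ S i) ∧ proj So w' = proj So w ∧
        x ∈ (parN S A).run w' (parN S A).I) ↔
      (∀ i, ∃ wi : List E, proj (S i ∩ So) wi = proj (S i ∩ So) w ∧
        x i ∈ (A i).run wi (A i).I) := by
  constructor
  · rintro ⟨w', _, hproj, hx⟩ i
    obtain ⟨p, hpI, hpath⟩ := (mem_run_iff _ _ _ _).mp hx
    refine ⟨proj (S i) w', ?_, (mem_run_iff _ _ _ _).mpr ⟨p i, hpI i, path_proj S A i hpath⟩⟩
    rw [proj_proj Set.inter_subset_left, ← proj_proj (T := S i ∩ So) Set.inter_subset_right w',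
      hproj, proj_proj Set.inter_subset_right]
  · intro h
    choose wi hproji hrun using h
    have H := fun i => (mem_run_iff _ _ _ _).mp (hrun i)
    choose p hpI hpath using H
    have hlet : ∀ i, ∀ a ∈ wi i, a ∈ S i := fun i => path_letters S A hown i (hpath i)
    have hws : ∀ i, proj So (wi i) = proj (S i ∩ So) (proj So w) := by
      intro i
      rw [proj_proj Set.inter_subset_right, ← hproji i]
      exact proj_congr fun a ha => by
        simp [Set.mem_inter_iff, hlet i a ha]
    obtain ⟨w', hw'1, hw'2, hw'3⟩ := obs_induction S So A hshared (proj So w)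
      (fun a ha => by
        obtain ⟨haw, haSo⟩ := mem_of_mem_proj ha
        exact ⟨haSo, hw a haw⟩)
      p x wi
      (fun i => ⟨hlet i, hws i, hpath i⟩)
    exact ⟨w', hw'1, hw'2, (mem_run_iff _ _ _ _).mpr ⟨p, hpI, hw'3⟩⟩
end

section
/- Suppose the state space of a DES G is partitioned as Q = Q_N ∪ Q_F (disjoint) such that for every word s ∈ L(G), every state in δ(I,s) lies in Q_F if and only if s contains a fault event, and lies in Q_N otherwise. Then G is A-diagnosable with respect to Σ_uo and Σ_F if and only if: for every s ∈ L(G) with δ(I,s) ⊆ Q_F, there exists t ∈ L(G)/s such that R_G(st) ⊆ Q_F. -/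
/-- The current-state estimate `R_G(t)` after observing `P(t)`,
where `So` is the set of observable events. -/
def Rst {Q E : Type} (A : NFA' Q E) (So : Set E) (t : List E) : Set Q :=
  {x | ∃ t' ∈ A.lang, proj So t' = proj So t ∧ x ∈ A.run t' A.I}

/-- A word is faulty if it contains a fault event (`w ∈ L_F = Σ*Σ_FΣ*`). -/
def Faulty {E : Type} (SF : Set E) (w : List E) : Prop := ∃ a ∈ w, a ∈ SF

/-- A-diagnosability w.r.t. observable events `So` and fault events `SF`:
every faulty word has an extension after which every observation-equivalent
word of the system is faulty. -/
def ADiagnosable {Q E : Type} (A : NFA' Q E) (So SF : Set E) : Prop :=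
  ∀ s ∈ A.lang, Faulty SF s →
    ∃ t : List E, s ++ t ∈ A.lang ∧
      ∀ w ∈ A.lang, proj So w = proj So (s ++ t) → Faulty SF w

/-- if the state space is partitioned as `Q = Q_N ∪ Q_F` such that
states reached by a word lie in `Q_F` iff the word is faulty (and in `Q_N`
otherwise), then `G` is A-diagnosable w.r.t. `Σ_uo` and `Σ_F` iff for every
`s ∈ L(G)` with `δ(I,s) ⊆ Q_F` there is `t ∈ L(G)/s` with `R_G(st) ⊆ Q_F`. -/
theorem aDiagnosable_iff_state_based {Q E : Type}
    (A : NFA' Q E) (Suo SF : Set E) (QN QF : Set Q)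
    (hunion : QN ∪ QF = Set.univ) (hdisj : QN ∩ QF = ∅)
    (hpart : ∀ s ∈ A.lang, ∀ x ∈ A.run s A.I, (x ∈ QF ↔ Faulty SF s)) :
    ADiagnosable A Suoᶜ SF ↔
      ∀ s ∈ A.lang, A.run s A.I ⊆ QF →
        ∃ t : List E, s ++ t ∈ A.lang ∧ Rst A Suoᶜ (s ++ t) ⊆ QF := by
  constructor
  · intro h s hs hsub
    obtain ⟨x, hx⟩ := id (hs : (A.run s A.I).Nonempty)
    have hF : Faulty SF s := (hpart s hs x hx).1 (hsub hx)
    obtain ⟨t, ht, hall⟩ := h s hs hF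
    refine ⟨t, ht, ?_⟩
    rintro y ⟨t', ht', hp, hy⟩
    exact (hpart t' ht' y hy).2 (hall t' ht' hp)
  · intro h s hs hF
    have hsub : A.run s A.I ⊆ QF := fun x hx => (hpart s hs x hx).2 hF
    obtain ⟨t, ht, hR⟩ := h s hs hsub
    refine ⟨t, ht, ?_⟩
    intro w hw hp
    obtain ⟨y, hy⟩ := id (hw : (A.run w A.I).Nonempty)
    exact (hpart w hw y hy).1 (hR ⟨w, hw, hp, hy⟩)
end
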